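/- Let q ∈ ℂ with |q| < 1. Then ∑_{n=0}^∞ q^{n²} / (q;q²)_n = 1 + ∑_{n=1}^∞ q^{n} · (−q²;q²)_{n−1}. -/

import Mathlib

/-- Finite q-Pochhammer symbol `(x;q)_n = ∏_{k=0}^{n-1} (1 - x q^k)`. -/
noncomputable def qPoch (x q : ℂ) (n : ℕ) : ℂ := ∏ k ∈ Finset.range n, (1 - x * q ^ k)

/-- Infinite q-Pochhammer symbol `(x;q)_∞ = ∏_{k=0}^{∞} (1 - x q^k)`. -/
noncomputable def qPochInf (x q : ℂ) : ℂ := ∏' k : ℕ, (1 - x * q ^ k)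

/-- Gaussian binomial coefficient `[n k]_q`, equal to `0` for `k > n`. -/
noncomputable def gbinom (q : ℂ) (n k : ℕ) : ℂ :=
  if k ≤ n then qPoch q q n / (qPoch q q k * qPoch q q (n - k)) else 0

lemma qPoch_zero (x q : ℂ) : qPoch x q 0 = 1 := by simp [qPoch]

lemma qPoch_succ (x q : ℂ) (n : ℕ) :
    qPoch x q (n + 1) = qPoch x q n * (1 - x * q ^ n) := by
  simp [qPoch, Finset.prod_range_succ]

lemma qPoch_succ' (x q : ℂ) (n : ℕ) :
    qPoch x q (n + 1) = (1 - x) * qPoch (x * q) q n := by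
  rw [qPoch, Finset.prod_range_succ']
  rw [mul_comm]
  simp only [pow_zero, mul_one, qPoch]
  congr 1
  apply Finset.prod_congr rfl
  intro k _
  rw [pow_succ']
  ring

lemma qPoch_ne_zero {x q : ℂ} (hx : ‖x‖ < 1) (hq : ‖q‖ ≤ 1) (n : ℕ) :
    qPoch x q n ≠ 0 := by
  rw [qPoch]
  apply Finset.prod_ne_zero_iff.2
  intro k _
  intro h
  have h1 : x * q ^ k = 1 := by linear_combination -h
  have : ‖x * q ^ k‖ < 1 := by
    calc ‖x * q ^ k‖ = ‖x‖ * ‖q‖ ^ k := by simp [norm_mul, norm_pow]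
    _ ≤ ‖x‖ * 1 := by
        apply mul_le_mul_of_nonneg_left _ (norm_nonneg x)
        exact pow_le_one₀ (norm_nonneg q) hq
    _ < 1 := by simpa using hx
  rw [h1] at this
  simp at this

section GB
variable {Q : ℂ} (hQ : ‖Q‖ < 1)
include hQ

lemma NN (n : ℕ) : qPoch Q Q n ≠ 0 := qPoch_ne_zero hQ hQ.le n

lemma gbinom_zero_right (n : ℕ) : gbinom Q n 0 = 1 := by
  rw [gbinom, if_pos (Nat.zero_le n)]
  simp [qPoch_zero]
  exact NN hQ n

lemma gbinom_self (n : ℕ) : gbinom Q n n = 1 := by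
  rw [gbinom, if_pos le_rfl]
  simp [qPoch_zero]
  exact NN hQ n

omit hQ in
lemma gbinom_eq_zero {n k : ℕ} (h : n < k) : gbinom Q n k = 0 := by
  rw [gbinom, if_neg (by omega)]

omit hQ in
lemma gbinom_symm {n k : ℕ} (h : k ≤ n) : gbinom Q n k = gbinom Q n (n - k) := by
  rw [gbinom, gbinom, if_pos h, if_pos (Nat.sub_le n k)]
  rw [show n - (n - k) = k by omega]
  ring

lemma pascal1 (k d : ℕ) :
    gbinom Q (k + d + 1) (k + 1)
      = gbinom Q (k + d) (k + 1) + Q ^ d * gbinom Q (k + d) k := by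
  cases d with
  | zero =>
    simp only [Nat.add_zero, pow_zero, one_mul]
    rw [gbinom_self hQ, gbinom_self hQ, gbinom_eq_zero (Nat.lt_succ_self k)]
    ring
  | succ d =>
    rw [gbinom, gbinom, gbinom, if_pos (by omega), if_pos (by omega), if_pos (by omega)]
    rw [show k + (d + 1) + 1 - (k + 1) = d + 1 by omega,
        show k + (d + 1) - (k + 1) = d by omega,
        show k + (d + 1) - k = d + 1 by omega]
    rw [show k + (d + 1) + 1 = (k + (d + 1)) + 1 by ring]
    rw [qPoch_succ Q Q (k + (d + 1)), qPoch_succ Q Q k, qPoch_succ Q Q d]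
    have h1 := NN hQ (k + (d + 1))
    have h2 := NN hQ k
    have h3 := NN hQ d
    have h4 : (1 : ℂ) - Q * Q ^ k ≠ 0 := by
      have := NN hQ (k + 1); rw [qPoch_succ] at this
      exact right_ne_zero_of_mul this
    have h5 : (1 : ℂ) - Q * Q ^ d ≠ 0 := by
      have := NN hQ (d + 1); rw [qPoch_succ] at this
      exact right_ne_zero_of_mul this
    field_simp
    ring

lemma pascal2 (j d : ℕ) :
    gbinom Q (j + d + 1) (j + 1)
      = gbinom Q (j + d) j + Q ^ (j + 1) * gbinom Q (j + d) (j + 1) := by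
  cases d with
  | zero =>
    simp only [Nat.add_zero]
    rw [gbinom_self hQ, gbinom_self hQ, gbinom_eq_zero (Nat.lt_succ_self j)]
    ring
  | succ d =>
    rw [gbinom, gbinom, gbinom, if_pos (by omega), if_pos (by omega), if_pos (by omega)]
    rw [show j + (d + 1) + 1 - (j + 1) = d + 1 by omega,
        show j + (d + 1) - j = d + 1 by omega,
        show j + (d + 1) - (j + 1) = d by omega]
    rw [show j + (d + 1) + 1 = (j + (d + 1)) + 1 by ring]
    rw [qPoch_succ Q Q (j + (d + 1)), qPoch_succ Q Q j, qPoch_succ Q Q d]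
    have h1 := NN hQ (j + (d + 1))
    have h2 := NN hQ j
    have h3 := NN hQ d
    have h4 : (1 : ℂ) - Q * Q ^ j ≠ 0 := by
      have := NN hQ (j + 1); rw [qPoch_succ] at this
      exact right_ne_zero_of_mul this
    have h5 : (1 : ℂ) - Q * Q ^ d ≠ 0 := by
      have := NN hQ (d + 1); rw [qPoch_succ] at this
      exact right_ne_zero_of_mul this
    field_simp
    ring

lemma gbinom_formula (k j : ℕ) :
    gbinom Q (k + j) j
      = (∏ i ∈ Finset.range k, (1 - Q * Q ^ (j + i))) / qPoch Q Q k := by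
  rw [gbinom, if_pos (by omega), show k + j - j = k by omega]
  rw [show k + j = j + k by ring]
  rw [qPoch, Finset.prod_range_add, ← qPoch]
  field_simp [NN hQ j, NN hQ k]

set_option maxHeartbeats 1000000 in
lemma gbinom_norm_le (k j : ℕ) :
    ‖gbinom Q (k + j) j‖ ≤ 2 ^ k / ‖qPoch Q Q k‖ := by
  rw [gbinom_formula hQ, norm_div]
  have hc : (0:ℝ) < ‖qPoch Q Q k‖ := norm_pos_iff.mpr (NN hQ k)
  refine div_le_div_of_nonneg_right ?_ hc.le
  calc ‖∏ i ∈ Finset.range k, (1 - Q * Q ^ (j + i))‖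
      = ∏ i ∈ Finset.range k, ‖(1 : ℂ) - Q * Q ^ (j + i)‖ := norm_prod _ _
    _ ≤ ∏ _i ∈ Finset.range k, (2 : ℝ) := by
        apply Finset.prod_le_prod
        · intro i _; exact norm_nonneg _
        · intro i _
          calc ‖(1 : ℂ) - Q * Q ^ (j + i)‖ ≤ ‖(1:ℂ)‖ + ‖Q * Q ^ (j + i)‖ := norm_sub_le _ _
            _ ≤ 1 + 1 := by
                rw [norm_one, norm_mul, norm_pow]
                have : ‖Q‖ * ‖Q‖ ^ (j + i) ≤ 1 :=
                  mul_le_one₀ hQ.le (pow_nonneg (norm_nonneg _) _)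
                    (pow_le_one₀ (norm_nonneg _) hQ.le)
                linarith
            _ = 2 := by norm_num
    _ = 2 ^ k := by simp

end GB

lemma qPoch_norm_ge {x q : ℂ} (hx : ‖x‖ < 1) (hq : ‖q‖ ≤ 1) (n : ℕ) :
    (1 - ‖x‖) ^ n ≤ ‖qPoch x q n‖ := by
  induction n with
  | zero => simp [qPoch_zero]
  | succ n ih =>
    rw [qPoch_succ, norm_mul, pow_succ]
    have h1 : 1 - ‖x‖ ≤ ‖(1 : ℂ) - x * q ^ n‖ := by
      have h2 : ‖x * q ^ n‖ ≤ ‖x‖ := by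
        rw [norm_mul, norm_pow]
        calc ‖x‖ * ‖q‖ ^ n ≤ ‖x‖ * 1 :=
              mul_le_mul_of_nonneg_left (pow_le_one₀ (norm_nonneg q) hq) (norm_nonneg x)
          _ = ‖x‖ := mul_one _
      calc 1 - ‖x‖ ≤ 1 - ‖x * q ^ n‖ := by linarith
        _ = ‖(1:ℂ)‖ - ‖x * q ^ n‖ := by rw [norm_one]
        _ ≤ ‖(1:ℂ) - x * q ^ n‖ := by
            have := abs_norm_sub_norm_le (1:ℂ) (x * q ^ n)
            have := abs_le.1 this
            linarith [this.2]
    have hp : (0:ℝ) ≤ 1 - ‖x‖ := by linarith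
    exact mul_le_mul ih h1 hp (norm_nonneg _)

lemma gen_sum {a c : ℝ} (ha : 0 ≤ a) (ha1 : a < 1) (hc : 0 ≤ c) :
    Summable fun k => a ^ (k * k) * c ^ k := by
  have htend : Filter.Tendsto (fun k : ℕ => a ^ (2 * k + 1) * c) Filter.atTop (nhds 0) := by
    have h2 : Filter.Tendsto (fun k : ℕ => (a ^ 2) ^ k) Filter.atTop (nhds 0) := by
      apply tendsto_pow_atTop_nhds_zero_of_lt_one (by positivity)
      nlinarith
    have : (fun k : ℕ => a ^ (2 * k + 1) * c) = fun k : ℕ => (a ^ 2) ^ k * (a * c) := by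
      funext k
      rw [pow_add, pow_mul, pow_one]
      ring
    rw [this]
    simpa using h2.mul_const (a * c)
  have hev : ∀ᶠ k in Filter.atTop, a ^ (2 * k + 1) * c ≤ 1 / 2 := by
    have := htend.eventually_le_const (by norm_num : (0:ℝ) < 1/2)
    exact this
  apply summable_of_ratio_norm_eventually_le (r := 1/2) (by norm_num)
  filter_upwards [hev] with k hk
  have hfk : (0:ℝ) ≤ a ^ (k * k) * c ^ k := by positivity
  have hfk1 : (0:ℝ) ≤ a ^ ((k+1) * (k+1)) * c ^ (k+1) := by positivity
  rw [Real.norm_of_nonneg hfk1, Real.norm_of_nonneg hfk]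
  have he : (k+1) * (k+1) = k * k + (2 * k + 1) := by ring
  rw [he, pow_add, pow_succ]
  calc a ^ (k*k) * a ^ (2*k+1) * (c ^ k * c)
      = (a ^ (2*k+1) * c) * (a ^ (k*k) * c ^ k) := by ring
    _ ≤ (1/2) * (a ^ (k*k) * c ^ k) := by
        apply mul_le_mul_of_nonneg_right hk (by positivity)

section MainQ
variable {q : ℂ} (hq : ‖q‖ < 1)
include hq

lemma hQ2 : ‖q ^ 2‖ < 1 := by
  rw [norm_pow]
  calc ‖q‖ ^ 2 ≤ ‖q‖ * 1 := by
        rw [pow_two]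
        exact mul_le_mul_of_nonneg_left hq.le (norm_nonneg q)
    _ < 1 := by simpa using hq

lemma lemA (m : ℕ) :
    ∑ k ∈ Finset.range (m + 1), q ^ (k ^ 2 + k) * gbinom (q ^ 2) m k
      = qPoch (-q ^ 2) (q ^ 2) m := by
  have hQ := hQ2 hq
  induction m with
  | zero =>
    simp [gbinom_self hQ, qPoch_zero]
  | succ m ih =>
    set Q := q ^ 2 with hQdef
    set S := ∑ k ∈ Finset.range (m + 1), q ^ (k ^ 2 + k) * gbinom Q m k with hS
    have claim1 : ∑ k ∈ Finset.range (m + 1), q ^ ((k+1) ^ 2 + (k+1)) * gbinom Q m (k+1)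
        = S - 1 := by
      have h1 : ∑ k ∈ Finset.range (m + 2), q ^ (k ^ 2 + k) * gbinom Q m k
          = (∑ k ∈ Finset.range (m + 1), q ^ ((k+1) ^ 2 + (k+1)) * gbinom Q m (k+1))
            + q ^ (0 ^ 2 + 0) * gbinom Q m 0 := Finset.sum_range_succ' _ _
      have h2 : ∑ k ∈ Finset.range (m + 2), q ^ (k ^ 2 + k) * gbinom Q m k
          = S + q ^ ((m+1) ^ 2 + (m+1)) * gbinom Q m (m+1) := Finset.sum_range_succ _ _
      rw [gbinom_eq_zero (Nat.lt_succ_self m)] at h2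
      rw [show (0:ℕ) ^ 2 + 0 = 0 by norm_num, pow_zero, one_mul, gbinom_zero_right hQ] at h1
      rw [mul_zero, add_zero] at h2
      rw [h2] at h1
      linear_combination -h1
    have claim2 : ∀ k ∈ Finset.range (m + 1),
        q ^ ((k+1) ^ 2 + (k+1)) * gbinom Q (m+1) (k+1)
          = q ^ ((k+1) ^ 2 + (k+1)) * gbinom Q m (k+1)
            + Q ^ (m+1) * (q ^ (k ^ 2 + k) * gbinom Q m k) := by
      intro k hk
      have hkm : k ≤ m := by
        have := Finset.mem_range.mp hk; omega
      obtain ⟨d, rfl⟩ := Nat.exists_eq_add_of_le hkm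
      have hp := pascal1 hQ k d
      rw [hp]
      have hpow : q ^ ((k+1) ^ 2 + (k+1)) * Q ^ d = Q ^ (k + d + 1) * q ^ (k ^ 2 + k) := by
        rw [hQdef, ← pow_mul, ← pow_mul, ← pow_add, ← pow_add]
        congr 1
        ring
      calc q ^ ((k+1) ^ 2 + (k+1)) * (gbinom Q (k+d) (k+1) + Q ^ d * gbinom Q (k+d) k)
          = q ^ ((k+1) ^ 2 + (k+1)) * gbinom Q (k+d) (k+1)
            + (q ^ ((k+1) ^ 2 + (k+1)) * Q ^ d) * gbinom Q (k+d) k := by ring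
        _ = _ := by rw [hpow]; ring
    rw [Finset.sum_range_succ' (fun k => q ^ (k ^ 2 + k) * gbinom Q (m+1) k) (m+1)]
    rw [Finset.sum_congr rfl claim2]
    rw [Finset.sum_add_distrib, claim1, ← Finset.mul_sum, ← hS, ih]
    rw [gbinom_zero_right hQ]
    rw [qPoch_succ]
    ring


lemma sumB (k : ℕ) {z : ℂ} (hz : ‖z‖ < 1) :
    Summable (fun j => gbinom (q ^ 2) (k + j) j * z ^ j) := by
  have hQ := hQ2 hq
  apply Summable.of_norm_bounded (g :=
    (fun j => (2 ^ k / ‖qPoch (q^2) (q^2) k‖) * ‖z‖ ^ j))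
  · exact (summable_geometric_of_lt_one (norm_nonneg z) hz).mul_left _
  · intro j
    rw [norm_mul, norm_pow]
    exact mul_le_mul_of_nonneg_right (gbinom_norm_le hQ k j) (pow_nonneg (norm_nonneg z) j)

lemma lemB (k : ℕ) : ∀ z : ℂ, ‖z‖ < 1 →
    ∑' j : ℕ, gbinom (q ^ 2) (k + j) j * z ^ j = 1 / qPoch z (q ^ 2) (k + 1) := by
  have hQ := hQ2 hq
  induction k with
  | zero =>
    intro z hz
    have h1 : ∀ j : ℕ, gbinom (q ^ 2) (0 + j) j * z ^ j = z ^ j := by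
      intro j
      rw [Nat.zero_add, gbinom_self hQ, one_mul]
    rw [tsum_congr h1, tsum_geometric_of_norm_lt_one hz]
    rw [show (0:ℕ) + 1 = 1 from rfl, qPoch, Finset.prod_range_one, pow_zero, mul_one]
    rw [inv_eq_one_div]
  | succ k ih =>
    intro z hz
    set Q := q ^ 2 with hQdef
    have hz1 : (1 : ℂ) - z ≠ 0 := by
      intro h
      have : z = 1 := by linear_combination -h
      rw [this] at hz; simp at hz
    have hQz : ‖Q * z‖ < 1 := by
      rw [norm_mul]
      calc ‖Q‖ * ‖z‖ ≤ 1 * ‖z‖ :=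
            mul_le_mul_of_nonneg_right hQ.le (norm_nonneg z)
        _ = ‖z‖ := one_mul _
        _ < 1 := hz
    set c : ℕ → ℂ := fun j => gbinom Q (k + 1 + j) j * z ^ j with hcdef
    set B : ℕ → ℂ := fun j => gbinom Q (k + j) j * (Q * z) ^ j with hBdef
    have hc : Summable c := sumB hq (k+1) hz
    have hB : Summable B := sumB hq k hQz
    set S := ∑' j, c j with hSdef
    have key : ∀ j : ℕ, c (j + 1) = z * c j + B (j + 1) := by
      intro j
      have hp := pascal2 hQ j (k + 1)
      rw [hcdef, hBdef]
      simp only []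
      rw [show k + 1 + (j + 1) = j + (k + 1) + 1 by omega]
      rw [hp]
      rw [show j + (k + 1) = k + 1 + j by omega]
      rw [show k + (j + 1) = k + 1 + j by omega]
      rw [mul_pow]
      ring
    have hc1 : Summable (fun j => c (j + 1)) := by
      rw [summable_nat_add_iff]; exact hc
    have hB1 : Summable (fun j => B (j + 1)) := by
      rw [summable_nat_add_iff]; exact hB
    have e1 : ∑' j, c (j + 1) = S - c 0 := by
      have := Summable.tsum_eq_zero_add hc
      rw [← hSdef] at this
      rw [this]; ring
    have e2 : ∑' j, c (j + 1) = z * S + (∑' j, B j - B 0) := by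
      calc ∑' j, c (j + 1) = ∑' j, (z * c j + B (j + 1)) := tsum_congr key
        _ = (∑' j, z * c j) + ∑' j, B (j + 1) := Summable.tsum_add (hc.mul_left z) hB1
        _ = z * S + (∑' j, B j - B 0) := by
            rw [tsum_mul_left, ← hSdef]
            congr 1
            have := Summable.tsum_eq_zero_add hB
            rw [this]; ring
    have hc0 : c 0 = 1 := by
      rw [hcdef]; simp only []
      rw [pow_zero, mul_one, Nat.add_zero, gbinom_zero_right hQ]
    have hB0 : B 0 = 1 := by
      rw [hBdef]; simp only []
      rw [pow_zero, mul_one, Nat.add_zero, gbinom_zero_right hQ]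
    have hBsum : ∑' j, B j = 1 / qPoch (Q * z) Q (k + 1) := ih (Q * z) hQz
    have hfin : S * (1 - z) = 1 / qPoch (Q * z) Q (k + 1) := by
      rw [hc0] at e1
      rw [hB0, hBsum] at e2
      rw [e1] at e2
      linear_combination e2
    have hpne : qPoch (Q * z) Q (k + 1) ≠ 0 := qPoch_ne_zero hQz hQ.le _
    rw [qPoch_succ' z Q (k + 1)]
    rw [show z * Q = Q * z by ring]
    rw [eq_div_iff (mul_ne_zero hz1 hpne)]
    calc S * ((1 - z) * qPoch (Q * z) Q (k + 1))
        = (S * (1 - z)) * qPoch (Q * z) Q (k + 1) := by ring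
      _ = (1 / qPoch (Q * z) Q (k + 1)) * qPoch (Q * z) Q (k + 1) := by rw [hfin]
      _ = 1 := by field_simp


lemma gbinom_norm_le' (n k : ℕ) :
    ‖gbinom (q ^ 2) n k‖ ≤ (2 / (1 - ‖q ^ 2‖)) ^ k := by
  have hQ := hQ2 hq
  have hpos : (0:ℝ) < 1 - ‖q ^ 2‖ := by linarith
  by_cases h : k ≤ n
  · obtain ⟨j, rfl⟩ := Nat.exists_eq_add_of_le h
    rw [gbinom_symm h, show k + j - k = j by omega]
    calc ‖gbinom (q^2) (k + j) j‖ ≤ 2 ^ k / ‖qPoch (q^2) (q^2) k‖ := gbinom_norm_le hQ k j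
      _ ≤ 2 ^ k / (1 - ‖q ^ 2‖) ^ k := by
          apply div_le_div_of_nonneg_left (by positivity) (by positivity)
          exact qPoch_norm_ge hQ hQ.le k
      _ = (2 / (1 - ‖q ^ 2‖)) ^ k := by rw [div_pow]
  · rw [gbinom_eq_zero (by omega)]
    simp only [norm_zero]
    positivity

set_option maxHeartbeats 2000000 in
theorem stmt10' :
    ∑' n : ℕ, q ^ (n ^ 2) / qPoch q (q ^ 2) n
      = 1 + ∑' n : ℕ, q ^ (n + 1) * qPoch (-q ^ 2) (q ^ 2) n := by
  have hQ := hQ2 hq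
  have hq1 : (0:ℝ) < 1 - ‖q‖ := by linarith
  have hQ1 : (0:ℝ) < 1 - ‖q ^ 2‖ := by linarith
  set Q := q ^ 2 with hQdef
  set C : ℝ := 2 / (1 - ‖Q‖) with hCdef
  have hC : 0 ≤ C := by positivity
  set F : ℕ → ℕ → ℂ := fun n k => q ^ (n + 1) * (q ^ (k ^ 2 + k) * gbinom Q n k) with hFdef
  -- norm bound
  have hFbd : ∀ n k : ℕ, ‖F n k‖ ≤ ‖q‖ ^ (n + 1) * (‖q‖ ^ (k ^ 2 + k) * C ^ k) := by
    intro n k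
    rw [hFdef]
    simp only []
    rw [norm_mul, norm_mul, norm_pow, norm_pow]
    apply mul_le_mul_of_nonneg_left _ (by positivity)
    exact mul_le_mul_of_nonneg_left (gbinom_norm_le' hq n k) (by positivity)
  -- summability of majorants
  have hg : Summable (fun n : ℕ => ‖q‖ ^ (n + 1)) := by
    have := (summable_geometric_of_lt_one (norm_nonneg q) hq).mul_right ‖q‖
    apply this.congr
    intro n
    rw [pow_succ]
  have hh : Summable (fun k : ℕ => ‖q‖ ^ (k ^ 2 + k) * C ^ k) := by
    have := gen_sum (norm_nonneg q) hq (mul_nonneg (norm_nonneg q) hC)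
    apply this.congr
    intro k
    rw [mul_pow, pow_add, pow_two]
    ring
  have hFsum : Summable (Function.uncurry F) := by
    apply Summable.of_norm_bounded (g :=
      (fun p : ℕ × ℕ => ‖q‖ ^ (p.1 + 1) * (‖q‖ ^ (p.2 ^ 2 + p.2) * C ^ p.2)))
    · exact hg.mul_of_nonneg hh (fun n => by positivity) (fun k => by positivity)
    · intro p
      exact hFbd p.1 p.2
  -- row sums
  have hrow : ∀ n : ℕ, ∑' k : ℕ, F n k = q ^ (n + 1) * qPoch (-Q) Q n := by
    intro n
    have hsupp : ∀ k ∉ Finset.range (n + 1), F n k = 0 := by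
      intro k hk
      rw [hFdef]
      simp only []
      rw [gbinom_eq_zero (by simpa using hk)]
      ring
    rw [tsum_eq_sum hsupp, ← Finset.mul_sum, lemA hq n]
  -- column summability & sums
  have hcolsummable : ∀ k : ℕ, Summable (fun n => F n k) := by
    intro k
    apply Summable.of_norm_bounded (g :=
      (fun n : ℕ => ‖q‖ ^ (n + 1) * (‖q‖ ^ (k ^ 2 + k) * C ^ k)))
    · exact hg.mul_right _
    · intro n; exact hFbd n k
  have hcol : ∀ k : ℕ, ∑' n : ℕ, F n k = q ^ ((k+1) ^ 2) / qPoch q Q (k + 1) := by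
    intro k
    have hzero : ∑ n ∈ Finset.range k, F n k = 0 := by
      apply Finset.sum_eq_zero
      intro n hn
      rw [hFdef]
      simp only []
      rw [gbinom_eq_zero (Finset.mem_range.mp hn)]
      ring
    have hterm : ∀ j : ℕ, F (j + k) k = q ^ ((k+1) ^ 2) * (gbinom Q (k + j) j * q ^ j) := by
      intro j
      have hsym : gbinom Q (j + k) k = gbinom Q (k + j) j := by
        rw [show j + k = k + j by omega]
        rw [gbinom_symm (by omega : k ≤ k + j), show k + j - k = j by omega]
      rw [hFdef]
      simp only []
      rw [hsym]
      have he : (j + k + 1) + (k ^ 2 + k) = ((k+1) ^ 2) + j := by ring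
      calc q ^ (j + k + 1) * (q ^ (k ^ 2 + k) * gbinom Q (k + j) j)
          = q ^ ((j + k + 1) + (k ^ 2 + k)) * gbinom Q (k + j) j := by
            rw [pow_add]; ring
        _ = q ^ (((k+1) ^ 2) + j) * gbinom Q (k + j) j := by rw [he]
        _ = q ^ ((k+1) ^ 2) * (gbinom Q (k + j) j * q ^ j) := by
            rw [pow_add]; ring
    have hsplit := Summable.sum_add_tsum_nat_add (f := fun n => F n k) k (hcolsummable k)
    have htail : ∑' j : ℕ, F (j + k) k = q ^ ((k+1) ^ 2) * (1 / qPoch q Q (k + 1)) := by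
      rw [tsum_congr hterm, tsum_mul_left, lemB hq k q hq]
    rw [← hsplit, hzero, zero_add, htail, mul_one_div]
  -- LHS summability
  have hLcol : Summable (fun k : ℕ => q ^ ((k+1) ^ 2) / qPoch q Q (k + 1)) := by
    apply Summable.of_norm_bounded (g :=
      (fun k => ‖q‖ ^ ((k+1) * (k+1)) * (1 / (1 - ‖q‖)) ^ (k+1)))
    · have := gen_sum (norm_nonneg q) hq (le_of_lt (by positivity : (0:ℝ) < 1/(1-‖q‖)))
      exact (summable_nat_add_iff 1).2 this
    · intro k
      rw [norm_div, norm_pow]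
      have hd : (0:ℝ) < (1 - ‖q‖) ^ (k+1) := by positivity
      have hden : (1 - ‖q‖) ^ (k+1) ≤ ‖qPoch q Q (k+1)‖ := qPoch_norm_ge hq hQ.le (k+1)
      calc ‖q‖ ^ ((k+1) ^ 2) / ‖qPoch q Q (k+1)‖
          ≤ ‖q‖ ^ ((k+1) ^ 2) / (1 - ‖q‖) ^ (k+1) :=
            div_le_div_of_nonneg_left (by positivity) hd hden
        _ = ‖q‖ ^ ((k+1) * (k+1)) * (1 / (1 - ‖q‖)) ^ (k+1) := by
            rw [show (k+1) ^ 2 = (k+1) * (k+1) by ring, div_pow, one_pow, mul_one_div]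
  have hLsummable : Summable (fun n : ℕ => q ^ (n ^ 2) / qPoch q Q n) := by
    rw [← summable_nat_add_iff 1]
    exact hLcol
  -- assembly
  rw [Summable.tsum_eq_zero_add hLsummable]
  have h0 : q ^ ((0:ℕ) ^ 2) / qPoch q Q 0 = 1 := by
    rw [qPoch_zero]; norm_num
  rw [h0]
  congr 1
  have e1 : ∀ k : ℕ, q ^ ((k+1) ^ 2) / qPoch q Q (k+1) = ∑' n, F n k :=
    fun k => (hcol k).symm
  rw [tsum_congr e1]
  rw [Summable.tsum_comm (f := F) hFsum]
  exact tsum_congr hrow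

end MainQ
theorem stmt10 (q : ℂ) (hq : ‖q‖ < 1) :
    ∑' n : ℕ, q ^ (n ^ 2) / qPoch q (q ^ 2) n
      = 1 + ∑' n : ℕ, q ^ (n + 1) * qPoch (-q ^ 2) (q ^ 2) n := by
  have hq' : ‖q‖ < 1 := hq
  exact stmt10' hq'
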